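/- Let f : Y → X be a morphism of affine schemes. Suppose that (a) the underlying continuous map |f| : |Y| → |X| is surjective, and (b) the induced map on global sections f♯ : O(X) → O(Y) is injective. Then f is an epimorphism in the category of locally ringed spaces. -/

import Mathlib

open CategoryTheory AlgebraicGeometry

open Opposite

lemma aux_basicOpen {X Y : Scheme} [IsAffine X] [IsAffine Y] (f : Y ⟶ X)
    (hinj : Function.Injective (f.app ⊤)) (r : Γ(X, ⊤)) :
    Function.Injective (f.app (X.basicOpen r)) := by
  have hT : IsAffineOpen (f ⁻¹ᵁ (⊤ : X.Opens)) := isAffineOpen_top Y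
  haveI := (isAffineOpen_top X).isLocalization_basicOpen r
  haveI := hT.isLocalization_basicOpen (f.app ⊤ r)
  rw [(isAffineOpen_top X).app_basicOpen_eq_away_map f hT r]
  rw [CategoryTheory.hom_comp]
  apply Function.Injective.comp
  · exact (ConcreteCategory.bijective_of_isIso
      (Y.presheaf.map (eqToHom (by simp)).op)).injective
  · haveI : IsLocalization ((Submonoid.powers r).map ((f.app ⊤).hom : Γ(X, ⊤) →+* Γ(Y, f ⁻¹ᵁ ⊤)))
        Γ(Y, Y.basicOpen (f.app ⊤ r)) := by
      rw [Submonoid.map_powers]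
      exact hT.isLocalization_basicOpen (f.app ⊤ r)
    exact IsLocalization.map_injective_of_injective (Submonoid.powers r)
      Γ(X, X.basicOpen r) Γ(Y, Y.basicOpen (f.app ⊤ r)) hinj

lemma aux_app_injective {X Y : Scheme} [IsAffine X] [IsAffine Y] (f : Y ⟶ X)
    (hinj : Function.Injective (f.app ⊤)) (U : X.Opens) :
    Function.Injective (f.app U) := by
  intro s t hst
  apply TopCat.Presheaf.section_ext X.sheaf U s t
  intro x hx
  obtain ⟨r, hrU, hxr⟩ := (isAffineOpen_top X).exists_basicOpen_le ⟨x, hx⟩ trivial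
  apply TopCat.Presheaf.germ_ext _ (X.basicOpen r) hxr (homOfLE hrU) (homOfLE hrU)
  apply aux_basicOpen f hinj r
  have nat := f.naturality (homOfLE hrU).op
  show f.app (X.basicOpen r) (X.presheaf.map (homOfLE hrU).op s) =
    f.app (X.basicOpen r) (X.presheaf.map (homOfLE hrU).op t)
  rw [← comp_apply, ← comp_apply, nat, comp_apply, comp_apply, hst]

theorem stmt_6 {X Y : Scheme} [IsAffine X] [IsAffine Y] (f : Y ⟶ X)
    (hsurj : Function.Surjective f.base)
    (hinj : Function.Injective (f.app ⊤)) :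
    Epi (Scheme.forgetToLocallyRingedSpace.map f) := by
  constructor
  intro Z u v h
  obtain ⟨⟨ub, uc⟩, hu⟩ := u
  obtain ⟨⟨vb, vc⟩, hv⟩ := v
  have hbase : ub = vb := by
    have hb := congrArg (fun g : Y.toLocallyRingedSpace ⟶ Z => g.toHom.base) h
    simp only [LocallyRingedSpace.comp_toHom] at hb
    ext x
    obtain ⟨y, rfl⟩ := hsurj x
    exact ConcreteCategory.congr_hom hb y
  subst hbase
  suffices hcc : uc = vc by subst hcc; rfl
  apply NatTrans.ext
  funext V
  refine CommRingCat.hom_ext (RingHom.ext fun s => ?_)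
  apply aux_app_injective f hinj ((TopologicalSpace.Opens.map ub).obj (unop V))
  have hc := PresheafedSpace.congr_app (congrArg LocallyRingedSpace.Hom.toHom h) V
  simp only [LocallyRingedSpace.comp_toHom, PresheafedSpace.comp_c_app, eqToHom_refl, CategoryTheory.Functor.map_id,
    Category.comp_id] at hc
  erw [eqToHom_refl, CategoryTheory.Functor.map_id, Category.comp_id] at hc
  exact congrArg (fun g => g s) hc
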